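/- Let ∗ be a finite character star-operation on a domain D. If A and B are both P-∗-almost super-homogeneous ideals of D (for the same maximal ∗-ideal P), then there exists a positive integer n such that B^n ⊆ (A^n)_∗ or A^n ⊆ (B^n)_∗. -/

import Mathlib

open FractionalIdeal

variable (D : Type*) (K : Type*) [CommRing D] [IsDomain D] [Field K] [Algebra D K]
  [IsFractionRing D K]

/-- A finite character star-operation on the integral domain `D`, acting on the
nonzero fractional ideals of `D` inside its quotient field `K`. -/
structure StarOperation where
  star : FractionalIdeal (nonZeroDivisors D) K → FractionalIdeal (nonZeroDivisors D) K
  star_principal : ∀ x : K, x ≠ 0 →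
    star (spanSingleton (nonZeroDivisors D) x) = spanSingleton (nonZeroDivisors D) x
  star_smul : ∀ (x : K) (A : FractionalIdeal (nonZeroDivisors D) K), x ≠ 0 → A ≠ 0 →
    star (spanSingleton (nonZeroDivisors D) x * A) = spanSingleton (nonZeroDivisors D) x * star A
  le_star : ∀ A, A ≠ 0 → A ≤ star A
  star_mono : ∀ A B, A ≠ 0 → B ≠ 0 → A ≤ B → star A ≤ star B
  star_star : ∀ A, A ≠ 0 → star (star A) = star A
  finite_character : ∀ A, A ≠ 0 → ∀ x ∈ star A,
    ∃ B : FractionalIdeal (nonZeroDivisors D) K,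
      B ≠ 0 ∧ B ≤ A ∧ (B : Submodule D K).FG ∧ x ∈ star B

/-- A prime ideal of height one: a nonzero prime with no nonzero prime strictly below it. -/
def HeightOnePrime (P : Ideal D) : Prop :=
  P.IsPrime ∧ P ≠ ⊥ ∧ ∀ Q : Ideal D, Q.IsPrime → Q < P → Q = ⊥

/-- Membership of `x : K` in the localization `D_P` viewed inside `K`. -/
def MemLocAt (P : Ideal D) (x : K) : Prop :=
  ∃ a t : D, t ∉ P ∧ x * algebraMap D K t = algebraMap D K a

/-- An almost valuation ring: for nonzero `a, b` some power `a^n` divides `b^n` or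
conversely. -/
def AVRing (R : Type*) [CommRing R] : Prop :=
  ∀ a b : R, a ≠ 0 → b ≠ 0 → ∃ n : ℕ, 0 < n ∧ (a ^ n ∣ b ^ n ∨ b ^ n ∣ a ^ n)

/-- The `v`-operation `A ↦ (A⁻¹)⁻¹` on fractional ideals. -/
noncomputable def vOp (A : FractionalIdeal (nonZeroDivisors D) K) : FractionalIdeal (nonZeroDivisors D) K :=
  (A⁻¹)⁻¹

/-- An integral ideal is a `t`-ideal if it contains `B_v` for every nonzero finitely
generated subideal `B`. -/
def IsTIdeal (I : Ideal D) : Prop :=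
  ∀ B : Ideal D, B ≠ ⊥ → B.FG → B ≤ I →
    vOp D K (B : FractionalIdeal (nonZeroDivisors D) K) ≤ (I : FractionalIdeal (nonZeroDivisors D) K)

/-- Maximal `t`-ideals. -/
def IsTMax (P : Ideal D) : Prop :=
  P ≠ ⊥ ∧ P ≠ ⊤ ∧ IsTIdeal D K P ∧
    ∀ J : Ideal D, J ≠ ⊤ → IsTIdeal D K J → P ≤ J → J = P

/-- An integral ideal is a `w`-ideal if it contains every `x ∈ K` with `xJ ⊆ I` for
some finitely generated ideal `J` with `J⁻¹ = D`. -/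
def IsWIdeal (I : Ideal D) : Prop :=
  ∀ x : K, (∃ J : Ideal D, J.FG ∧ ((J : FractionalIdeal (nonZeroDivisors D) K))⁻¹ = 1 ∧
      spanSingleton (nonZeroDivisors D) x * (J : FractionalIdeal (nonZeroDivisors D) K) ≤
        (I : FractionalIdeal (nonZeroDivisors D) K)) →
    x ∈ (I : FractionalIdeal (nonZeroDivisors D) K)

/-- Maximal `w`-ideals. -/
def IsWMax (P : Ideal D) : Prop :=
  P ≠ ⊥ ∧ P ≠ ⊤ ∧ IsWIdeal D K P ∧
    ∀ J : Ideal D, J ≠ ⊤ → IsWIdeal D K J → P ≤ J → J = P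

/-- `P ∈ Ass(K/D)`: `P` is a prime minimal over a conductor ideal `(aD : bD)`. -/
def InAssKD (P : Ideal D) : Prop :=
  P.IsPrime ∧ ∃ a b : D, a ≠ 0 ∧ b ≠ 0 ∧
    (Ideal.span {a}).colon (Ideal.span {b}) ≤ P ∧
    ∀ Q : Ideal D, Q.IsPrime → (Ideal.span {a}).colon (Ideal.span {b}) ≤ Q → Q ≤ P → Q = P

/-- An AGCD (almost GCD) domain: for all nonzero `a, b` there is `n ≥ 1` with
`(aⁿ, bⁿ)_v` principal. -/
def IsAGCDDomain : Prop :=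
  ∀ a b : D, a ≠ 0 → b ≠ 0 → ∃ n : ℕ, 0 < n ∧ ∃ d : D,
    vOp D K ((Ideal.span {a ^ n, b ^ n} : Ideal D) : FractionalIdeal (nonZeroDivisors D) K) =
      spanSingleton (nonZeroDivisors D) (algebraMap D K d)

/-- `D_P` is an almost valuation domain, for `P` a prime of `D`. -/
def AVAtPrime {D : Type*} [CommRing D] (P : Ideal D) (hP : P.IsPrime) : Prop :=
  AVRing (Localization (@Ideal.primeCompl D _ P hP))

namespace StarOperation

variable {D K}
variable (s : StarOperation D K)

/-- The star closure of an integral ideal, as an integral ideal. -/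
def starI (I : Ideal D) : Ideal D :=
  (s.star (I : FractionalIdeal (nonZeroDivisors D) K) : Submodule D K).comap
    (Algebra.linearMap D K)

/-- An integral `∗`-ideal. -/
def IsStarIdeal (I : Ideal D) : Prop :=
  s.star (I : FractionalIdeal (nonZeroDivisors D) K) = (I : FractionalIdeal (nonZeroDivisors D) K)

/-- A maximal `∗`-ideal: maximal among proper integral `∗`-ideals (such ideals are prime). -/
def IsMaxStarIdeal (P : Ideal D) : Prop :=
  P ≠ ⊥ ∧ P ≠ ⊤ ∧ P.IsPrime ∧ s.IsStarIdeal P ∧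
    ∀ J : Ideal D, J ≠ ⊤ → s.IsStarIdeal J → P ≤ J → J = P

/-- `∗`-invertibility of a fractional ideal. -/
def IsStarInvertible (A : FractionalIdeal (nonZeroDivisors D) K) : Prop :=
  s.star (A * A⁻¹) = 1

/-- `∗`-invertibility of an integral ideal. -/
def IsStarInvertibleI (I : Ideal D) : Prop :=
  s.IsStarInvertible (I : FractionalIdeal (nonZeroDivisors D) K)

/-- A `P`-`∗`-homogeneous ideal: nonzero, finitely generated, contained in the maximal
`∗`-ideal `P` and in no other maximal `∗`-ideal. -/
def IsHomogeneous (P I : Ideal D) : Prop :=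
  I ≠ ⊥ ∧ I.FG ∧ s.IsMaxStarIdeal P ∧ I ≤ P ∧
    ∀ Q : Ideal D, s.IsMaxStarIdeal Q → I ≤ Q → Q = P

/-- A type 1 `∗`-homogeneous ideal: `M(A) = √(A_∗)`. -/
def IsType1 (P I : Ideal D) : Prop := P = (s.starI I).radical

/-- A type 2 `∗`-homogeneous ideal: `A_∗ = (M(A)ⁿ)_∗` for some `n ≥ 1`. -/
def IsType2 (P I : Ideal D) : Prop :=
  ∃ n : ℕ, 0 < n ∧
    s.star (I : FractionalIdeal (nonZeroDivisors D) K) =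
      s.star ((P ^ n : Ideal D) : FractionalIdeal (nonZeroDivisors D) K)

/-- A `P`-`∗`-almost super-homogeneous ideal. -/
def IsAlmostSuperHomogeneous (P I : Ideal D) : Prop :=
  s.IsStarInvertibleI I ∧ s.IsHomogeneous P I ∧
    ∀ (k : ℕ) (b : Fin k → D), (∀ i, b i ∈ P) →
      (∃ r : ℕ, 0 < r ∧ ((I ^ r : Ideal D) : FractionalIdeal (nonZeroDivisors D) K) ≤
        s.star ((Ideal.span (Set.range b) : Ideal D) : FractionalIdeal (nonZeroDivisors D) K)) →
      ∃ n : ℕ, 0 < n ∧ s.IsStarInvertibleI (Ideal.span (Set.range fun i => b i ^ n))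

/-- A `∗`-super-homogeneous ideal: every `∗`-homogeneous ideal containing it is
`∗`-invertible. -/
def IsSuperHomogeneous (P I : Ideal D) : Prop :=
  s.IsHomogeneous P I ∧
    ∀ B Q : Ideal D, s.IsHomogeneous Q B → I ≤ B → s.IsStarInvertibleI B

/-- A `P`-`∗`-afg-homogeneous (almost factorial general homogeneous) ideal. -/
def IsAfgHomogeneous (P I : Ideal D) : Prop :=
  s.IsStarInvertibleI I ∧ s.IsHomogeneous P I ∧
    ∀ (k : ℕ) (b : Fin k → D), (∀ i, b i ∈ P) →
      (∃ r : ℕ, 0 < r ∧ ((I ^ r : Ideal D) : FractionalIdeal (nonZeroDivisors D) K) ≤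
        s.star ((Ideal.span (Set.range b) : Ideal D) : FractionalIdeal (nonZeroDivisors D) K)) →
      ∃ n : ℕ, 0 < n ∧ ∃ d : D,
        s.star ((Ideal.span (Set.range fun i => b i ^ n) : Ideal D) :
            FractionalIdeal (nonZeroDivisors D) K) =
          spanSingleton (nonZeroDivisors D) (algebraMap D K d)

/-- A `∗`-af-homogeneous ideal: every `∗`-homogeneous ideal containing it has a power
whose `∗`-closure is principal. -/
def IsAfHomogeneous (P I : Ideal D) : Prop :=
  s.IsHomogeneous P I ∧
    ∀ B Q : Ideal D, s.IsHomogeneous Q B → I ≤ B →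
      ∃ n : ℕ, 0 < n ∧ ∃ d : D,
        s.star ((B ^ n : Ideal D) : FractionalIdeal (nonZeroDivisors D) K) =
          spanSingleton (nonZeroDivisors D) (algebraMap D K d)

/-- `D` is a `∗`-SH domain with respect to a property of ideals: every nonzero proper
principal ideal is a `∗`-product of ideals with the given property. -/
def IsSHWith (prop : Ideal D → Prop) : Prop :=
  ∀ x : D, x ≠ 0 → ¬IsUnit x →
    ∃ (k : ℕ) (A : Fin k → Ideal D), (∀ i, prop (A i)) ∧
      s.star ((∏ i, A i : Ideal D) : FractionalIdeal (nonZeroDivisors D) K) =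
        ((Ideal.span {x} : Ideal D) : FractionalIdeal (nonZeroDivisors D) K)

/-- A `∗`-almost super-SH domain. -/
def IsAlmostSuperSH : Prop :=
  s.IsSHWith fun I => ∃ P, s.IsAlmostSuperHomogeneous P I

/-- Finite character: every nonzero nonunit lies in only finitely many maximal
`∗`-ideals. -/
def FiniteCharacterDom : Prop :=
  ∀ x : D, x ≠ 0 → ¬IsUnit x → {P : Ideal D | s.IsMaxStarIdeal P ∧ x ∈ P}.Finite

/-- Independence: no two distinct maximal `∗`-ideals contain a common nonzero prime. -/
def IndependentDom : Prop :=
  ∀ P Q : Ideal D, s.IsMaxStarIdeal P → s.IsMaxStarIdeal Q → P ≠ Q →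
    ∀ L : Ideal D, L.IsPrime → L ≠ ⊥ → ¬(L ≤ P ∧ L ≤ Q)

/-- A `∗`-h-local domain. -/
def IsHLocal : Prop := s.FiniteCharacterDom ∧ s.IndependentDom

/-- A `∗`-almost independent ring of Krull type. -/
def IsAlmostIRKT : Prop :=
  s.IsHLocal ∧ ∀ (P : Ideal D) (h : s.IsMaxStarIdeal P), AVAtPrime P h.2.2.1

/-- A `∗`-almost generalized Krull domain. -/
def IsAGKD : Prop :=
  (∀ x : K, (∀ P : Ideal D, HeightOnePrime D P → MemLocAt D K P x) →
      ∃ d : D, algebraMap D K d = x) ∧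
  (∀ x : D, x ≠ 0 → ¬IsUnit x → {P : Ideal D | HeightOnePrime D P ∧ x ∈ P}.Finite) ∧
  (∀ P : Ideal D, s.IsMaxStarIdeal P ↔ HeightOnePrime D P) ∧
  (∀ (P : Ideal D) (h : s.IsMaxStarIdeal P), AVAtPrime P h.2.2.1)

/-- A `∗`-Krull domain: `∗`-h-local, `∗-Max(D) = X⁽¹⁾(D)`, and `D_P` is a DVR for each
maximal `∗`-ideal `P`. -/
def IsStarKrull : Prop :=
  s.IsHLocal ∧ (∀ P : Ideal D, s.IsMaxStarIdeal P ↔ HeightOnePrime D P) ∧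
    ∀ (P : Ideal D) (h : s.IsMaxStarIdeal P),
      @IsDiscreteValuationRing (Localization (@Ideal.primeCompl D _ P h.2.2.1)) _
        (IsLocalization.isDomain_localization (@Ideal.primeCompl_le_nonZeroDivisors D _ _ P h.2.2.1))

/-- A `∗`-almost Bézout domain. -/
def IsAlmostBezout : Prop :=
  ∀ a b : D, a ≠ 0 → b ≠ 0 → ∃ n : ℕ, 0 < n ∧ ∃ d : D,
    s.star ((Ideal.span {a ^ n, b ^ n} : Ideal D) : FractionalIdeal (nonZeroDivisors D) K) =
      spanSingleton (nonZeroDivisors D) (algebraMap D K d)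

/-- The `∗`-class group `Cl_∗(D)` is torsion: every `∗`-invertible fractional ideal has a
power whose `∗`-closure is principal. -/
def HasTorsionClassGroup : Prop :=
  ∀ A : FractionalIdeal (nonZeroDivisors D) K, A ≠ 0 → s.IsStarInvertible A →
    ∃ n : ℕ, 0 < n ∧ ∃ x : K, s.star (A ^ n) = spanSingleton (nonZeroDivisors D) x

end StarOperation

variable {D : Type*} {K : Type*} [CommRing D] [IsDomain D] [Field K] [Algebra D K]
  [IsFractionRing D K]

open StarOperation


section AshAux

open FractionalIdeal Pointwise

set_option linter.unusedSectionVars false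

private lemma ash_exists_mem_ne_zero {X : FractionalIdeal (nonZeroDivisors D) K} (h : X ≠ 0) :
    ∃ x ∈ X, x ≠ (0 : K) := by
  by_contra hc
  push_neg at hc
  apply h
  ext x
  simp only [mem_zero_iff]
  exact ⟨fun hx => hc x hx, fun hx => hx ▸ X.zero_mem⟩

private lemma ash_mul_ne_zero {X Y : FractionalIdeal (nonZeroDivisors D) K} (hX : X ≠ 0)
    (hY : Y ≠ 0) : X * Y ≠ 0 := by
  obtain ⟨x, hx, hx0⟩ := ash_exists_mem_ne_zero hX
  obtain ⟨y, hy, hy0⟩ := ash_exists_mem_ne_zero hY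
  intro h
  have hm : x * y ∈ X * Y := FractionalIdeal.mul_mem_mul hx hy
  rw [h, mem_zero_iff] at hm
  exact mul_ne_zero hx0 hy0 hm

private lemma ash_one_ne_zero : (1 : FractionalIdeal (nonZeroDivisors D) K) ≠ 0 := by
  intro h
  have h1 : (1 : K) ∈ (1 : FractionalIdeal (nonZeroDivisors D) K) := one_mem_one _
  rw [h, mem_zero_iff] at h1
  exact one_ne_zero h1

private lemma ash_pow_ne_zero {X : FractionalIdeal (nonZeroDivisors D) K} (hX : X ≠ 0) :
    ∀ k : ℕ, X ^ k ≠ 0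
  | 0 => by rw [pow_zero]; exact ash_one_ne_zero
  | k + 1 => by rw [pow_succ]; exact ash_mul_ne_zero (ash_pow_ne_zero hX k) hX

private lemma ash_inv_ne_zero {X : FractionalIdeal (nonZeroDivisors D) K} (hX : X ≠ 0) :
    X⁻¹ ≠ 0 := by
  obtain ⟨a, haS, ha⟩ := X.isFractional
  have ha0 : a ≠ 0 := mem_nonZeroDivisors_iff_ne_zero.mp haS
  have hmap : algebraMap D K a ≠ 0 :=
    (map_ne_zero_iff _ (IsFractionRing.injective D K)).mpr ha0
  intro h
  have hmem : algebraMap D K a ∈ X⁻¹ := by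
    rw [mem_inv_iff hX]
    intro y hy
    obtain ⟨b, hb⟩ := ha y (FractionalIdeal.mem_coe.mpr hy)
    exact (mem_one_iff _).mpr ⟨b, by rw [hb, Algebra.smul_def]⟩
  rw [h, mem_zero_iff] at hmem
  exact hmap hmem

private lemma ash_star_ne_zero (s : StarOperation D K)
    {X : FractionalIdeal (nonZeroDivisors D) K} (hX : X ≠ 0) : s.star X ≠ 0 := by
  intro h
  obtain ⟨x, hx, hx0⟩ := ash_exists_mem_ne_zero hX
  have hm := s.le_star X hX hx
  rw [h] at hm
  exact hx0 (by simpa using hm)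

private lemma ash_star_one (s : StarOperation D K) :
    s.star (1 : FractionalIdeal (nonZeroDivisors D) K) = 1 := by
  have h := s.star_principal 1 one_ne_zero
  rwa [spanSingleton_one] at h

private lemma ash_star_mul_le (s : StarOperation D K)
    {X Y : FractionalIdeal (nonZeroDivisors D) K} (hX : X ≠ 0) (hY : Y ≠ 0) :
    s.star X * Y ≤ s.star (X * Y) := by
  rw [FractionalIdeal.mul_le]
  intro x hx y hy
  by_cases hy0 : y = 0
  · rw [hy0, mul_zero]
    exact (s.star (X * Y)).zero_mem
  · have hys : spanSingleton (nonZeroDivisors D) y ≠ 0 := by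
      rw [Ne, spanSingleton_eq_zero_iff]; exact hy0
    have hle : spanSingleton (nonZeroDivisors D) y * X ≤ X * Y := by
      rw [mul_comm (spanSingleton (nonZeroDivisors D) y) X]
      exact _root_.mul_le_mul_right (spanSingleton_le_iff_mem.mpr hy) X
    have hmem : x * y ∈ spanSingleton (nonZeroDivisors D) y * s.star X := by
      have h2 := FractionalIdeal.mul_mem_mul (mem_spanSingleton_self (nonZeroDivisors D) y) hx
      rwa [mul_comm y x] at h2
    rw [← s.star_smul y X hy0 hX] at hmem
    exact s.star_mono _ _ (ash_mul_ne_zero hys hX) (ash_mul_ne_zero hX hY) hle hmem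

private lemma ash_qmul (s : StarOperation D K)
    {X Y : FractionalIdeal (nonZeroDivisors D) K} (hX : X ≠ 0) (hY : Y ≠ 0) :
    s.star (s.star X * Y) = s.star (X * Y) := by
  have hXY : X * Y ≠ 0 := ash_mul_ne_zero hX hY
  have hsX : s.star X ≠ 0 := ash_star_ne_zero s hX
  have hsXY : s.star X * Y ≠ 0 := ash_mul_ne_zero hsX hY
  apply le_antisymm
  · have h1 := s.star_mono _ _ hsXY (ash_star_ne_zero s hXY) (ash_star_mul_le s hX hY)
    rwa [s.star_star _ hXY] at h1
  · exact s.star_mono _ _ hXY hsXY (_root_.mul_le_mul_left (s.le_star X hX) Y)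

private lemma ash_qmul' (s : StarOperation D K)
    {X Y : FractionalIdeal (nonZeroDivisors D) K} (hX : X ≠ 0) (hY : Y ≠ 0) :
    s.star (X * s.star Y) = s.star (X * Y) := by
  rw [mul_comm X (s.star Y), mul_comm X Y]
  exact ash_qmul s hY hX

private lemma ash_mul_congr (s : StarOperation D K)
    {X₁ X₂ Y₁ Y₂ : FractionalIdeal (nonZeroDivisors D) K}
    (h1 : X₁ ≠ 0) (h2 : X₂ ≠ 0) (h3 : Y₁ ≠ 0) (h4 : Y₂ ≠ 0)
    (e1 : s.star X₁ = s.star X₂) (e2 : s.star Y₁ = s.star Y₂) :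
    s.star (X₁ * Y₁) = s.star (X₂ * Y₂) := by
  calc s.star (X₁ * Y₁) = s.star (s.star X₁ * Y₁) := (ash_qmul s h1 h3).symm
    _ = s.star (s.star X₂ * Y₁) := by rw [e1]
    _ = s.star (X₂ * Y₁) := ash_qmul s h2 h3
    _ = s.star (X₂ * s.star Y₁) := (ash_qmul' s h2 h3).symm
    _ = s.star (X₂ * s.star Y₂) := by rw [e2]
    _ = s.star (X₂ * Y₂) := ash_qmul' s h2 h4

private lemma ash_cancel (s : StarOperation D K)
    {X Y Z W : FractionalIdeal (nonZeroDivisors D) K}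
    (hX : X ≠ 0) (hY : Y ≠ 0) (hZ : Z ≠ 0) (hW : W ≠ 0)
    (hZW : s.star (Z * W) = 1) (h : s.star (X * Z) = s.star (Y * Z)) :
    s.star X = s.star Y := by
  have hZW0 : Z * W ≠ 0 := ash_mul_ne_zero hZ hW
  have key : ∀ T : FractionalIdeal (nonZeroDivisors D) K, T ≠ 0 →
      s.star (T * (Z * W)) = s.star T := by
    intro T hT
    have h1 := ash_qmul' s hT hZW0
    rw [hZW, mul_one] at h1
    exact h1.symm
  calc s.star X = s.star (X * (Z * W)) := (key X hX).symm
    _ = s.star ((X * Z) * W) := by rw [mul_assoc]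
    _ = s.star (s.star (X * Z) * W) := (ash_qmul s (ash_mul_ne_zero hX hZ) hW).symm
    _ = s.star (s.star (Y * Z) * W) := by rw [h]
    _ = s.star ((Y * Z) * W) := ash_qmul s (ash_mul_ne_zero hY hZ) hW
    _ = s.star (Y * (Z * W)) := by rw [mul_assoc]
    _ = s.star Y := key Y hY

private lemma ash_pow_inv (s : StarOperation D K)
    {X : FractionalIdeal (nonZeroDivisors D) K} (hX : X ≠ 0)
    (hinv : s.star (X * X⁻¹) = 1) : ∀ m : ℕ, s.star ((X * X⁻¹) ^ m) = 1
  | 0 => by rw [pow_zero]; exact ash_star_one s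
  | m + 1 => by
    have hXX : X * X⁻¹ ≠ 0 := ash_mul_ne_zero hX (ash_inv_ne_zero hX)
    have hp : (X * X⁻¹) ^ m ≠ 0 := ash_pow_ne_zero hXX m
    calc s.star ((X * X⁻¹) ^ (m + 1)) = s.star ((X * X⁻¹) * (X * X⁻¹) ^ m) := by
          rw [pow_succ']
      _ = s.star (s.star (X * X⁻¹) * (X * X⁻¹) ^ m) := (ash_qmul s hXX hp).symm
      _ = s.star (1 * (X * X⁻¹) ^ m) := by rw [hinv]
      _ = s.star ((X * X⁻¹) ^ m) := by rw [one_mul]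
      _ = 1 := ash_pow_inv s hX hinv m

private lemma ash_cancel_pow (s : StarOperation D K)
    {X Y₁ Y₂ : FractionalIdeal (nonZeroDivisors D) K} (hX : X ≠ 0)
    (hinv : s.star (X * X⁻¹) = 1) (m : ℕ) (hY₁ : Y₁ ≠ 0) (hY₂ : Y₂ ≠ 0)
    (h : s.star (Y₁ * X ^ m) = s.star (Y₂ * X ^ m)) : s.star Y₁ = s.star Y₂ :=
  ash_cancel s hY₁ hY₂ (ash_pow_ne_zero hX m) (ash_pow_ne_zero (ash_inv_ne_zero hX) m)
    (by rw [← mul_pow]; exact ash_pow_inv s hX hinv m) h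

private lemma ash_prod_mem_pow {ι : Type*} [DecidableEq ι] (A : Ideal D) (t : Finset ι)
    (f : ι → D) (h : ∀ j ∈ t, f j ∈ A) : (∏ j ∈ t, f j) ∈ A ^ t.card := by
  induction t using Finset.induction_on with
  | empty => simp [Ideal.one_eq_top]
  | @insert a t ha ih =>
    rw [Finset.prod_insert ha, Finset.card_insert_of_notMem ha, pow_succ']
    exact Ideal.mul_mem_mul (h a (Finset.mem_insert_self a t))
      (ih fun j hj => h j (Finset.mem_insert_of_mem hj))

private lemma ash_pow_le {k n : ℕ} (hk : 0 < k) (hn : 0 < n) (a : Fin k → D) :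
    Ideal.span (Set.range a) ^ (k * n) ≤
      Ideal.span (Set.range fun i => a i ^ n) * Ideal.span (Set.range a) ^ (k * n - n) := by
  classical
  have hspan : Ideal.span (Set.range a) ^ (k * n) = Ideal.span (Set.range a ^ (k * n)) := by
    rw [Ideal.span, Submodule.span_pow]
  rw [hspan, Ideal.span_le]
  intro x hx
  rw [Set.mem_pow] at hx
  obtain ⟨f, hf⟩ := hx
  have hx' : x = ∏ i : Fin (k * n), (f i : D) := by rw [← hf, List.prod_ofFn]
  choose g hg using fun i => (f i).2
  have hxg : x = ∏ i : Fin (k * n), a (g i) :=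
    hx'.trans (Finset.prod_congr rfl fun i _ => (hg i).symm)
  have hsum : ∑ i0 : Fin k, (Finset.univ.filter fun j => g j = i0).card = k * n := by
    rw [← Finset.card_eq_sum_card_fiberwise (fun j (_ : j ∈ Finset.univ) => Finset.mem_univ (g j))]
    simp
  have hpig : ∃ i0 : Fin k, n ≤ (Finset.univ.filter fun j => g j = i0).card := by
    by_contra hcon
    push_neg at hcon
    have h1 : ∑ i0 : Fin k, (Finset.univ.filter fun j => g j = i0).card ≤
        ∑ _i0 : Fin k, (n - 1) :=
      Finset.sum_le_sum fun i0 _ => Nat.le_sub_one_of_lt (hcon i0)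
    rw [hsum, Finset.sum_const, Finset.card_univ, Fintype.card_fin, smul_eq_mul] at h1
    have h2 : n ≤ n - 1 := Nat.le_of_mul_le_mul_left h1 hk
    omega
  obtain ⟨i0, hi0⟩ := hpig
  obtain ⟨S, hS, hScard⟩ := Finset.exists_subset_card_eq hi0
  have hxprod : x = (∏ j ∈ S, a (g j)) * ∏ j ∈ Sᶜ, a (g j) :=
    hxg.trans (Finset.prod_mul_prod_compl S _).symm
  have h1 : (∏ j ∈ S, a (g j)) ∈ Ideal.span (Set.range fun i => a i ^ n) := by
    have he : ∏ j ∈ S, a (g j) = a i0 ^ n := by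
      calc ∏ j ∈ S, a (g j) = ∏ _j ∈ S, a i0 :=
            Finset.prod_congr rfl fun j hj => by
              rw [(Finset.mem_filter.mp (hS hj)).2]
        _ = a i0 ^ n := by rw [Finset.prod_const, hScard]
    rw [he]
    exact Ideal.subset_span ⟨i0, rfl⟩
  have h2 : (∏ j ∈ Sᶜ, a (g j)) ∈ Ideal.span (Set.range a) ^ (k * n - n) := by
    have hcard : Sᶜ.card = k * n - n := by
      rw [Finset.card_compl, hScard, Fintype.card_fin]
    rw [← hcard]
    exact ash_prod_mem_pow _ _ _ fun j _ => Ideal.subset_span ⟨g j, rfl⟩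
  show x ∈ (Ideal.span (Set.range fun i => a i ^ n) *
      Ideal.span (Set.range a) ^ (k * n - n) : Ideal D)
  rw [hxprod]
  exact Ideal.mul_mem_mul h1 h2

private lemma ash_ideal_pow_ne_bot {A : Ideal D} (hA : A ≠ ⊥) : ∀ m : ℕ, A ^ m ≠ ⊥
  | 0 => by rw [pow_zero, Ideal.one_eq_top]; exact top_ne_bot
  | m + 1 => by
    rw [pow_succ]
    intro h
    rcases Ideal.mul_eq_bot.mp h with h' | h'
    · exact ash_ideal_pow_ne_bot hA m h'
    · exact hA h'

private lemma ash_star_pow (s : StarOperation D K) {A : Ideal D} {k n : ℕ}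
    (hk : 0 < k) (hn : 0 < n) (a : Fin k → D)
    (hgen : Ideal.span (Set.range a) = A) (hA : A ≠ ⊥) (hinv : s.IsStarInvertibleI A) :
    A ^ (k * n) ≤ Ideal.span (Set.range fun i => a i ^ n) ∧
      s.star ((Ideal.span (Set.range fun i => a i ^ n) : Ideal D) :
          FractionalIdeal (nonZeroDivisors D) K) =
        s.star ((A ^ n : Ideal D) : FractionalIdeal (nonZeroDivisors D) K) := by
  set A' := Ideal.span (Set.range fun i => a i ^ n) with hA'def
  have hA'le : A' ≤ A ^ n := by
    rw [hA'def, Ideal.span_le]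
    rintro x ⟨i, rfl⟩
    exact Ideal.pow_mem_pow (hgen ▸ Ideal.subset_span ⟨i, rfl⟩) n
  have hcomb : A ^ (k * n) ≤ A' * A ^ (k * n - n) := by
    rw [← hgen]
    exact ash_pow_le hk hn a
  have epow : A ^ n * A ^ (k * n - n) = A ^ (k * n) := by
    rw [← pow_add]
    congr 1
    have : n ≤ k * n := Nat.le_mul_of_pos_left n hk
    omega
  have hmul_le : A' * A ^ (k * n - n) ≤ A ^ (k * n) := by
    calc A' * A ^ (k * n - n) ≤ A ^ n * A ^ (k * n - n) := Ideal.mul_mono hA'le le_rfl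
      _ = A ^ (k * n) := epow
  have heq : A' * A ^ (k * n - n) = A ^ (k * n) := le_antisymm hmul_le hcomb
  refine ⟨hcomb.trans Ideal.mul_le_left, ?_⟩
  have hA'0 : A' ≠ ⊥ := by
    intro h
    apply ash_ideal_pow_ne_bot hA (k * n)
    rw [← heq, h]
    simp
  have hcoe : ((A' : FractionalIdeal (nonZeroDivisors D) K)) *
      ((A : FractionalIdeal (nonZeroDivisors D) K)) ^ (k * n - n) =
      ((A ^ n : Ideal D) : FractionalIdeal (nonZeroDivisors D) K) *
        ((A : FractionalIdeal (nonZeroDivisors D) K)) ^ (k * n - n) := by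
    calc ((A' : FractionalIdeal (nonZeroDivisors D) K)) *
        ((A : FractionalIdeal (nonZeroDivisors D) K)) ^ (k * n - n)
        = ↑A' * ((A ^ (k * n - n) : Ideal D) : FractionalIdeal (nonZeroDivisors D) K) := by
          rw [coeIdeal_pow]
      _ = ((A' * A ^ (k * n - n) : Ideal D) : FractionalIdeal (nonZeroDivisors D) K) :=
          (coeIdeal_mul _ _).symm
      _ = ((A ^ n * A ^ (k * n - n) : Ideal D) : FractionalIdeal (nonZeroDivisors D) K) := by
          rw [heq, epow]
      _ = ↑(A ^ n) * ((A ^ (k * n - n) : Ideal D) : FractionalIdeal (nonZeroDivisors D) K) :=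
          coeIdeal_mul _ _
      _ = ↑(A ^ n) * ((A : FractionalIdeal (nonZeroDivisors D) K)) ^ (k * n - n) := by
          rw [← coeIdeal_pow]
  exact ash_cancel_pow s (coeIdeal_ne_zero.mpr hA) hinv (k * n - n)
    (coeIdeal_ne_zero.mpr hA'0)
    (coeIdeal_ne_zero.mpr (ash_ideal_pow_ne_bot hA n))
    (by rw [hcoe])

private lemma ash_chain_common {c : Set (Ideal D)} (hchain : IsChain (· ≤ ·) c)
    {y : Ideal D} (hy : y ∈ c) (T : Finset K)
    (h : ∀ t ∈ T, ∃ J ∈ c, t ∈ ((J : Ideal D) : FractionalIdeal (nonZeroDivisors D) K)) :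
    ∃ J ∈ c, ∀ t ∈ T, t ∈ ((J : Ideal D) : FractionalIdeal (nonZeroDivisors D) K) := by
  classical
  induction T using Finset.induction_on with
  | empty => exact ⟨y, hy, by simp⟩
  | @insert t T htT ih =>
    obtain ⟨J₁, hJ₁, h₁⟩ := h t (Finset.mem_insert_self _ _)
    obtain ⟨J₂, hJ₂, h₂⟩ := ih fun u hu => h u (Finset.mem_insert_of_mem hu)
    rcases hchain.total hJ₁ hJ₂ with hle | hle
    · refine ⟨J₂, hJ₂, fun u hu => ?_⟩
      rcases Finset.mem_insert.mp hu with rfl | hu'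
      · exact (coeIdeal_le_coeIdeal K).mpr hle h₁
      · exact h₂ u hu'
    · refine ⟨J₁, hJ₁, fun u hu => ?_⟩
      rcases Finset.mem_insert.mp hu with rfl | hu'
      · exact h₁
      · exact (coeIdeal_le_coeIdeal K).mpr hle (h₂ u hu')

private lemma ash_exists_max (s : StarOperation D K) {I : Ideal D} (hb : I ≠ ⊥) (ht : I ≠ ⊤)
    (hst : s.IsStarIdeal I) : ∃ Q : Ideal D, s.IsMaxStarIdeal Q ∧ I ≤ Q := by
  classical
  set 𝒮 : Set (Ideal D) := {J | J ≠ ⊤ ∧ s.IsStarIdeal J ∧ I ≤ J} with h𝒮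
  have hub : ∀ c ⊆ 𝒮, IsChain (· ≤ ·) c → ∀ y ∈ c, ∃ ub ∈ 𝒮, ∀ z ∈ c, z ≤ ub := by
    intro c hc𝒮 hchain y hy
    have hIy : I ≤ y := (hc𝒮 hy).2.2
    have hIs : I ≤ sSup c := hIy.trans (le_sSup hy)
    have hsb : sSup c ≠ ⊥ := fun h0 => hb (le_bot_iff.mp (h0 ▸ hIs))
    have hne : ((sSup c : Ideal D) : FractionalIdeal (nonZeroDivisors D) K) ≠ 0 :=
      coeIdeal_ne_zero.mpr hsb
    refine ⟨sSup c, ⟨?_, ?_, hIs⟩, fun z hz => le_sSup hz⟩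
    · intro htop
      have h1 : (1 : D) ∈ sSup c := htop ▸ Submodule.mem_top
      obtain ⟨J, hJ, h1J⟩ := (Submodule.mem_sSup_of_directed ⟨y, hy⟩ hchain.directedOn).mp h1
      exact (hc𝒮 hJ).1 ((Ideal.eq_top_iff_one J).mpr h1J)
    · show s.star _ = _
      refine le_antisymm ?_ (s.le_star _ hne)
      intro x hx
      obtain ⟨Bf, hB0, hBle, hBfg, hxB⟩ := s.finite_character _ hne x hx
      obtain ⟨T, hT⟩ := hBfg
      have hTmem : ∀ t ∈ T, ∃ J ∈ c,
          t ∈ ((J : Ideal D) : FractionalIdeal (nonZeroDivisors D) K) := by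
        intro t htT
        have htB : t ∈ Bf := by
          rw [← FractionalIdeal.mem_coe, ← hT]
          exact Submodule.subset_span htT
        obtain ⟨d, hd, hdt⟩ := (mem_coeIdeal _).mp (hBle htB)
        obtain ⟨J, hJ, hdJ⟩ := (Submodule.mem_sSup_of_directed ⟨y, hy⟩ hchain.directedOn).mp hd
        exact ⟨J, hJ, hdt ▸ mem_coeIdeal_of_mem _ hdJ⟩
      obtain ⟨J, hJc, hJT⟩ := ash_chain_common hchain hy T hTmem
      have hJb : J ≠ ⊥ := fun h0 => hb (le_bot_iff.mp (h0 ▸ (hc𝒮 hJc).2.2))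
      have hBJ : Bf ≤ ((J : Ideal D) : FractionalIdeal (nonZeroDivisors D) K) := by
        rw [← FractionalIdeal.coe_le_coe, ← hT, Submodule.span_le]
        intro t ht
        exact SetLike.mem_coe.mpr (FractionalIdeal.mem_coe.mpr (hJT t ht))
      have hstep : s.star Bf ≤ s.star ((J : Ideal D) : FractionalIdeal (nonZeroDivisors D) K) :=
        s.star_mono _ _ hB0 (coeIdeal_ne_zero.mpr hJb) hBJ
      rw [(hc𝒮 hJc).2.1] at hstep
      exact (coeIdeal_le_coeIdeal K).mpr (le_sSup hJc) (hstep hxB)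
  obtain ⟨M, hIM, hMmax⟩ := zorn_le_nonempty₀ 𝒮 hub I ⟨ht, hst, le_rfl⟩
  have hM𝒮 : M ∈ 𝒮 := hMmax.1
  have hMne : M ≠ ⊤ := hM𝒮.1
  have hMstar : s.IsStarIdeal M := hM𝒮.2.1
  have hMb : M ≠ ⊥ := fun h0 => hb (le_bot_iff.mp (h0 ▸ hIM))
  have hMf : ((M : Ideal D) : FractionalIdeal (nonZeroDivisors D) K) ≠ 0 :=
    coeIdeal_ne_zero.mpr hMb
  have key : ∀ z : D, z ∉ M →
      s.star (((M ⊔ Ideal.span {z} : Ideal D)) : FractionalIdeal (nonZeroDivisors D) K) = 1 := by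
    intro z hz
    have hsupb : (M ⊔ Ideal.span {z} : Ideal D) ≠ ⊥ :=
      fun h0 => hMb (le_bot_iff.mp (h0 ▸ le_sup_left))
    have hne : (((M ⊔ Ideal.span {z} : Ideal D)) :
        FractionalIdeal (nonZeroDivisors D) K) ≠ 0 := coeIdeal_ne_zero.mpr hsupb
    by_contra hJtop
    have hle1 : s.star (((M ⊔ Ideal.span {z} : Ideal D)) :
        FractionalIdeal (nonZeroDivisors D) K) ≤ 1 := by
      have h1 := s.star_mono _ 1 hne ash_one_ne_zero coeIdeal_le_one
      rwa [ash_star_one] at h1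
    obtain ⟨J₁, hJ₁⟩ := le_one_iff_exists_coeIdeal.mp hle1
    have hJ₁star : s.IsStarIdeal J₁ := by
      show s.star _ = _
      rw [hJ₁]
      exact s.star_star _ hne
    have hJ₁netop : J₁ ≠ ⊤ := by
      intro h0
      rw [h0, coeIdeal_top] at hJ₁
      exact hJtop hJ₁.symm
    have hMJ₁ : M ≤ J₁ := by
      rw [← coeIdeal_le_coeIdeal (K := K)]
      rw [hJ₁]
      exact le_trans ((coeIdeal_le_coeIdeal K).mpr le_sup_left) (s.le_star _ hne)
    have hJM : J₁ ≤ M := hMmax.2 ⟨hJ₁netop, hJ₁star, hIM.trans hMJ₁⟩ hMJ₁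
    have hzJ : z ∈ J₁ := by
      have hzsup : z ∈ M ⊔ Ideal.span {z} :=
        Ideal.mem_sup_right (Ideal.mem_span_singleton_self z)
      have hzm := s.le_star _ hne (mem_coeIdeal_of_mem _ hzsup)
      rw [← hJ₁] at hzm
      obtain ⟨z', hz', hz'e⟩ := (mem_coeIdeal _).mp hzm
      rwa [← IsFractionRing.injective D K hz'e]
    exact hz (hJM hzJ)
  have hMprime : M.IsPrime := by
    refine ⟨hMne, ?_⟩
    intro x y hxy
    by_contra hcon
    push_neg at hcon
    obtain ⟨hx, hy'⟩ := hcon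
    have h1 := key x hx
    have h2 := key y hy'
    have hne1 : (((M ⊔ Ideal.span {x} : Ideal D)) :
        FractionalIdeal (nonZeroDivisors D) K) ≠ 0 :=
      coeIdeal_ne_zero.mpr fun h0 => hMb (le_bot_iff.mp (h0 ▸ le_sup_left))
    have hne2 : (((M ⊔ Ideal.span {y} : Ideal D)) :
        FractionalIdeal (nonZeroDivisors D) K) ≠ 0 :=
      coeIdeal_ne_zero.mpr fun h0 => hMb (le_bot_iff.mp (h0 ▸ le_sup_left))
    have hprodle : (M ⊔ Ideal.span {x}) * (M ⊔ Ideal.span {y}) ≤ M := by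
      rw [Ideal.sup_mul, Ideal.mul_sup, Ideal.mul_sup]
      refine sup_le (sup_le Ideal.mul_le_right Ideal.mul_le_left) (sup_le Ideal.mul_le_right ?_)
      rw [Ideal.span_singleton_mul_span_singleton]
      rw [Ideal.span_le]
      intro u hu
      rw [Set.mem_singleton_iff] at hu
      rw [hu]
      exact hxy
    have e : s.star ((((M ⊔ Ideal.span {x}) : Ideal D)) *
        (((M ⊔ Ideal.span {y}) : Ideal D)) : FractionalIdeal (nonZeroDivisors D) K) = 1 := by
      have hcg := ash_mul_congr s hne1 ash_one_ne_zero hne2 ash_one_ne_zero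
        (h1.trans (ash_star_one s).symm) (h2.trans (ash_star_one s).symm)
      rwa [one_mul, ash_star_one] at hcg
    have hle : (1 : FractionalIdeal (nonZeroDivisors D) K) ≤ ↑M := by
      calc (1 : FractionalIdeal (nonZeroDivisors D) K)
          = s.star ((((M ⊔ Ideal.span {x}) : Ideal D)) *
            (((M ⊔ Ideal.span {y}) : Ideal D)) : FractionalIdeal (nonZeroDivisors D) K) :=
            e.symm
        _ ≤ s.star ↑M := s.star_mono _ _ (ash_mul_ne_zero hne1 hne2) hMf (by
            rw [← coeIdeal_mul]
            exact (coeIdeal_le_coeIdeal K).mpr hprodle)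
        _ = ↑M := hMstar
    have htop : (⊤ : Ideal D) ≤ M := by
      rw [← coeIdeal_le_coeIdeal (K := K), coeIdeal_top]
      exact hle
    exact hMne (top_le_iff.mp htop)
  refine ⟨M, ⟨hMb, hMne, hMprime, hMstar, fun J hJtop hJstar hMJ =>
    le_antisymm (hMmax.2 ⟨hJtop, hJstar, hIM.trans hMJ⟩ hMJ) hMJ⟩, hIM⟩

private lemma ash_bound (s : StarOperation D K) (P : Ideal D) {X' : Ideal D}
    {𝔠 : FractionalIdeal (nonZeroDivisors D) K}
    (hX'0 : X' ≠ ⊥) (h𝔠 : 𝔠 ≠ 0) (h𝔠le : 𝔠 ≤ 1)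
    (hWne1 : s.star ((X' : FractionalIdeal (nonZeroDivisors D) K) * 𝔠⁻¹) ≠ 1)
    (hXP : ∀ Q, s.IsMaxStarIdeal Q → X' ≤ Q → Q = P)
    (hstar𝔠 : s.star (s.star ((X' : FractionalIdeal (nonZeroDivisors D) K) * 𝔠⁻¹) * 𝔠) =
      s.star (X' : FractionalIdeal (nonZeroDivisors D) K))
    (hWle1 : s.star ((X' : FractionalIdeal (nonZeroDivisors D) K) * 𝔠⁻¹) ≤ 1) :
    s.star ((X' : FractionalIdeal (nonZeroDivisors D) K) * 𝔠⁻¹) ≤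
      ((P : Ideal D) : FractionalIdeal (nonZeroDivisors D) K) := by
  set W := s.star ((X' : FractionalIdeal (nonZeroDivisors D) K) * 𝔠⁻¹) with hW
  have hX'f : (X' : FractionalIdeal (nonZeroDivisors D) K) ≠ 0 := coeIdeal_ne_zero.mpr hX'0
  have hci : 𝔠⁻¹ ≠ 0 := ash_inv_ne_zero h𝔠
  have hXc : (X' : FractionalIdeal (nonZeroDivisors D) K) * 𝔠⁻¹ ≠ 0 :=
    ash_mul_ne_zero hX'f hci
  have hW0 : W ≠ 0 := ash_star_ne_zero s hXc
  obtain ⟨W', hW'⟩ := le_one_iff_exists_coeIdeal.mp hWle1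
  have hW'b : W' ≠ ⊥ := fun h0 => hW0 (by rw [← hW', h0, coeIdeal_bot])
  have hW't : W' ≠ ⊤ := by
    intro h0
    rw [h0, coeIdeal_top] at hW'
    exact hWne1 hW'.symm
  have hW'star : s.IsStarIdeal W' := by
    show s.star _ = _
    rw [hW']
    exact s.star_star _ hXc
  obtain ⟨Q, hQmax, hWQ⟩ := ash_exists_max s hW'b hW't hW'star
  have hstep : s.star (X' : FractionalIdeal (nonZeroDivisors D) K) ≤ ↑Q := by
    rw [← hstar𝔠]
    have hWs : s.star W = W := s.star_star _ hXc
    have h1 : W * 𝔠 ≤ W := by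
      calc W * 𝔠 ≤ W * 1 := _root_.mul_le_mul_right h𝔠le W
        _ = W := mul_one W
    have h2 : s.star (W * 𝔠) ≤ s.star W := s.star_mono _ _ (ash_mul_ne_zero hW0 h𝔠) hW0 h1
    calc s.star (W * 𝔠) ≤ s.star W := h2
      _ = W := hWs
      _ = ↑W' := hW'.symm
      _ ≤ ↑Q := (coeIdeal_le_coeIdeal K).mpr hWQ
  have hX'Q : X' ≤ Q := (coeIdeal_le_coeIdeal K).mp ((s.le_star _ hX'f).trans hstep)
  have hQP : Q = P := hXP Q hQmax hX'Q
  calc W = ↑W' := hW'.symm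
    _ ≤ ↑Q := (coeIdeal_le_coeIdeal K).mpr hWQ
    _ = ↑P := by rw [hQP]

private lemma ash_dichotomy (s : StarOperation D K) (P : Ideal D) {A' B' : Ideal D}
    (hPmax : s.IsMaxStarIdeal P) (hA'0 : A' ≠ ⊥) (hB'0 : B' ≠ ⊥)
    (hCinv : s.IsStarInvertibleI (A' ⊔ B'))
    (hAP : ∀ Q, s.IsMaxStarIdeal Q → A' ≤ Q → Q = P)
    (hBP : ∀ Q, s.IsMaxStarIdeal Q → B' ≤ Q → Q = P) :
    ((B' : FractionalIdeal (nonZeroDivisors D) K) ≤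
        s.star (A' : FractionalIdeal (nonZeroDivisors D) K)) ∨
      ((A' : FractionalIdeal (nonZeroDivisors D) K) ≤
        s.star (B' : FractionalIdeal (nonZeroDivisors D) K)) := by
  set 𝔞 : FractionalIdeal (nonZeroDivisors D) K := ↑A' with h𝔞def
  set 𝔟 : FractionalIdeal (nonZeroDivisors D) K := ↑B' with h𝔟def
  set 𝔠 : FractionalIdeal (nonZeroDivisors D) K := ↑(A' ⊔ B') with h𝔠def
  have h𝔞 : 𝔞 ≠ 0 := coeIdeal_ne_zero.mpr hA'0
  have h𝔟 : 𝔟 ≠ 0 := coeIdeal_ne_zero.mpr hB'0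
  have hsupb : (A' ⊔ B' : Ideal D) ≠ ⊥ := fun h0 => hA'0 (le_bot_iff.mp (h0 ▸ le_sup_left))
  have h𝔠 : 𝔠 ≠ 0 := coeIdeal_ne_zero.mpr hsupb
  have h𝔠eq : 𝔠 = 𝔞 + 𝔟 := by rw [h𝔠def, coeIdeal_sup]
  have hinv : s.star (𝔠 * 𝔠⁻¹) = 1 := hCinv
  have hci : 𝔠⁻¹ ≠ 0 := ash_inv_ne_zero h𝔠
  have h𝔞𝔠 : 𝔞 ≤ 𝔠 := (coeIdeal_le_coeIdeal K).mpr le_sup_left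
  have h𝔟𝔠 : 𝔟 ≤ 𝔠 := (coeIdeal_le_coeIdeal K).mpr le_sup_right
  set U := s.star (𝔞 * 𝔠⁻¹) with hUdef
  set V := s.star (𝔟 * 𝔠⁻¹) with hVdef
  have h𝔞c : 𝔞 * 𝔠⁻¹ ≠ 0 := ash_mul_ne_zero h𝔞 hci
  have h𝔟c : 𝔟 * 𝔠⁻¹ ≠ 0 := ash_mul_ne_zero h𝔟 hci
  have h𝔠c : 𝔠 * 𝔠⁻¹ ≠ 0 := ash_mul_ne_zero h𝔠 hci
  have hU0 : U ≠ 0 := ash_star_ne_zero s h𝔞c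
  have hV0 : V ≠ 0 := ash_star_ne_zero s h𝔟c
  have hUle1 : U ≤ 1 := by
    have h1 := s.star_mono _ _ h𝔞c h𝔠c (_root_.mul_le_mul_left h𝔞𝔠 𝔠⁻¹)
    rwa [hinv] at h1
  have hVle1 : V ≤ 1 := by
    have h1 := s.star_mono _ _ h𝔟c h𝔠c (_root_.mul_le_mul_left h𝔟𝔠 𝔠⁻¹)
    rwa [hinv] at h1
  have e0 : s.star (𝔠⁻¹ * 𝔠) = 1 := by rw [mul_comm]; exact hinv
  have hic : 𝔠⁻¹ * 𝔠 ≠ 0 := ash_mul_ne_zero hci h𝔠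
  have hU𝔠 : s.star (U * 𝔠) = s.star 𝔞 := by
    calc s.star (U * 𝔠) = s.star ((𝔞 * 𝔠⁻¹) * 𝔠) := ash_qmul s h𝔞c h𝔠
      _ = s.star (𝔞 * (𝔠⁻¹ * 𝔠)) := by rw [mul_assoc]
      _ = s.star (𝔞 * 1) :=
        ash_mul_congr s h𝔞 h𝔞 hic ash_one_ne_zero rfl (by rw [e0, ash_star_one])
      _ = s.star 𝔞 := by rw [mul_one]
  have hV𝔠 : s.star (V * 𝔠) = s.star 𝔟 := by
    calc s.star (V * 𝔠) = s.star ((𝔟 * 𝔠⁻¹) * 𝔠) := ash_qmul s h𝔟c h𝔠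
      _ = s.star (𝔟 * (𝔠⁻¹ * 𝔠)) := by rw [mul_assoc]
      _ = s.star (𝔟 * 1) :=
        ash_mul_congr s h𝔟 h𝔟 hic ash_one_ne_zero rfl (by rw [e0, ash_star_one])
      _ = s.star 𝔟 := by rw [mul_one]
  by_cases hU1 : U = 1
  · left
    have he : s.star 𝔞 = s.star 𝔠 := by rw [← hU𝔠, hU1, one_mul]
    calc 𝔟 ≤ 𝔠 := h𝔟𝔠
      _ ≤ s.star 𝔠 := s.le_star _ h𝔠
      _ = s.star 𝔞 := he.symm
  by_cases hV1 : V = 1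
  · right
    have he : s.star 𝔟 = s.star 𝔠 := by rw [← hV𝔠, hV1, one_mul]
    calc 𝔞 ≤ 𝔠 := h𝔞𝔠
      _ ≤ s.star 𝔠 := s.le_star _ h𝔠
      _ = s.star 𝔟 := he.symm
  exfalso
  have hUP : U ≤ ((P : Ideal D) : FractionalIdeal (nonZeroDivisors D) K) :=
    ash_bound s P hA'0 h𝔠 coeIdeal_le_one hU1 hAP hU𝔠 hUle1
  have hVP : V ≤ ((P : Ideal D) : FractionalIdeal (nonZeroDivisors D) K) :=
    ash_bound s P hB'0 h𝔠 coeIdeal_le_one hV1 hBP hV𝔠 hVle1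
  have hsum : 𝔠 * 𝔠⁻¹ ≤ U + V := by
    have hsplit : 𝔠 * 𝔠⁻¹ = 𝔞 * 𝔠⁻¹ ⊔ 𝔟 * 𝔠⁻¹ := by
      rw [h𝔠eq, add_mul, sup_eq_add]
    rw [hsplit, ← sup_eq_add]
    exact sup_le ((s.le_star _ h𝔞c).trans le_sup_left) ((s.le_star _ h𝔟c).trans le_sup_right)
  have hUV0 : U + V ≠ 0 := by
    intro h0
    apply hU0
    have hle : U ≤ U + V := by rw [← sup_eq_add]; exact le_sup_left
    rw [h0] at hle
    exact _root_.le_zero_iff.mp hle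
  have h1le : (1 : FractionalIdeal (nonZeroDivisors D) K) ≤ s.star (U + V) := by
    calc (1 : FractionalIdeal (nonZeroDivisors D) K) = s.star (𝔠 * 𝔠⁻¹) := hinv.symm
      _ ≤ s.star (U + V) := s.star_mono _ _ h𝔠c hUV0 hsum
  have hPne : ((P : Ideal D) : FractionalIdeal (nonZeroDivisors D) K) ≠ 0 :=
    coeIdeal_ne_zero.mpr hPmax.1
  have hUVP : U + V ≤ ((P : Ideal D) : FractionalIdeal (nonZeroDivisors D) K) := by
    rw [← sup_eq_add]
    exact sup_le hUP hVP
  have hfin : (1 : FractionalIdeal (nonZeroDivisors D) K) ≤ ↑P := by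
    have h2 := s.star_mono _ _ hUV0 hPne hUVP
    rw [hPmax.2.2.2.1] at h2
    exact h1le.trans h2
  have htop : (⊤ : Ideal D) ≤ P := by
    rw [← coeIdeal_le_coeIdeal (K := K), coeIdeal_top]
    exact hfin
  exact hPmax.2.1 (top_le_iff.mp htop)

end AshAux

theorem stmt3 (s : StarOperation D K) (P A B : Ideal D)
    (hA : s.IsAlmostSuperHomogeneous P A) (hB : s.IsAlmostSuperHomogeneous P B) :
    ∃ n : ℕ, 0 < n ∧
      (((B ^ n : Ideal D) : FractionalIdeal (nonZeroDivisors D) K) ≤ s.star ((A ^ n : Ideal D) : FractionalIdeal (nonZeroDivisors D) K) ∨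
        ((A ^ n : Ideal D) : FractionalIdeal (nonZeroDivisors D) K) ≤ s.star ((B ^ n : Ideal D) : FractionalIdeal (nonZeroDivisors D) K)) := by
  classical
  obtain ⟨hAinv, ⟨hA0, hAfg, hPmax, hAleP, hAuniq⟩, hASH⟩ := hA
  obtain ⟨hBinv, ⟨hB0, hBfg, -, hBleP, hBuniq⟩, -⟩ := hB
  obtain ⟨kA, a, hgenA'⟩ := Submodule.fg_iff_exists_fin_generating_family.mp hAfg
  obtain ⟨kB, b, hgenB'⟩ := Submodule.fg_iff_exists_fin_generating_family.mp hBfg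
  have hgenA : Ideal.span (Set.range a) = A := hgenA'
  have hgenB : Ideal.span (Set.range b) = B := hgenB'
  have hkA : 0 < kA := by
    rcases Nat.eq_zero_or_pos kA with h | h
    · exfalso
      apply hA0
      subst h
      rw [← hgenA, Set.range_eq_empty, Ideal.span_empty]
    · exact h
  have hkB : 0 < kB := by
    rcases Nat.eq_zero_or_pos kB with h | h
    · exfalso
      apply hB0
      subst h
      rw [← hgenB, Set.range_eq_empty, Ideal.span_empty]
    · exact h
  set c : Fin (kA + kB) → D := Fin.append a b with hcdef
  have hcP : ∀ i, c i ∈ P := by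
    intro i
    refine Fin.addCases (motive := fun i => c i ∈ P) (fun j => ?_) (fun j => ?_) i
    · show Fin.append a b (Fin.castAdd kB j) ∈ P
      rw [Fin.append_left]
      exact hAleP (hgenA ▸ Ideal.subset_span ⟨j, rfl⟩)
    · show Fin.append a b (Fin.natAdd kA j) ∈ P
      rw [Fin.append_right]
      exact hBleP (hgenB ▸ Ideal.subset_span ⟨j, rfl⟩)
  have hrangec : ∀ m : ℕ, Set.range (fun i => c i ^ m) =
      Set.range (fun i => a i ^ m) ∪ Set.range (fun j => b j ^ m) := by
    intro m
    ext x
    constructor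
    · rintro ⟨i, rfl⟩
      refine Fin.addCases (motive := fun i => c i ^ m ∈
        Set.range (fun i => a i ^ m) ∪ Set.range (fun j => b j ^ m)) (fun j => ?_) (fun j => ?_) i
      · left
        exact ⟨j, by show a j ^ m = Fin.append a b (Fin.castAdd kB j) ^ m; rw [Fin.append_left]⟩
      · right
        exact ⟨j, by show b j ^ m = Fin.append a b (Fin.natAdd kA j) ^ m; rw [Fin.append_right]⟩
    · rintro (⟨j, rfl⟩ | ⟨j, rfl⟩)
      · exact ⟨Fin.castAdd kB j, by
          show Fin.append a b (Fin.castAdd kB j) ^ m = a j ^ m; rw [Fin.append_left]⟩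
      · exact ⟨Fin.natAdd kA j, by
          show Fin.append a b (Fin.natAdd kA j) ^ m = b j ^ m; rw [Fin.append_right]⟩
  have hABne : (A ⊔ B : Ideal D) ≠ ⊥ := fun h => hA0 (le_bot_iff.mp (h ▸ le_sup_left))
  have hspanc : Ideal.span (Set.range c) = A ⊔ B := by
    have h1 : Set.range c = Set.range a ∪ Set.range b := by
      have h2 := hrangec 1
      simpa [pow_one] using h2
    rw [h1, Ideal.span_union, hgenA, hgenB]
  obtain ⟨n, hn, hCinv⟩ := hASH (kA + kB) c hcP ⟨1, one_pos, by
    rw [pow_one, hspanc]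
    exact le_trans ((coeIdeal_le_coeIdeal K).mpr le_sup_left)
      (s.le_star _ (coeIdeal_ne_zero.mpr hABne))⟩
  set A' := Ideal.span (Set.range fun i => a i ^ n) with hA'def
  set B' := Ideal.span (Set.range fun j => b j ^ n) with hB'def
  have hCsplit : Ideal.span (Set.range fun i => c i ^ n) = A' ⊔ B' := by
    rw [hrangec n, Ideal.span_union]
  rw [hCsplit] at hCinv
  obtain ⟨hApow, hAstar⟩ := ash_star_pow s hkA hn a hgenA hA0 hAinv
  obtain ⟨hBpow, hBstar⟩ := ash_star_pow s hkB hn b hgenB hB0 hBinv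
  have hA'0 : A' ≠ ⊥ := fun h =>
    ash_ideal_pow_ne_bot hA0 (kA * n) (le_bot_iff.mp (h ▸ hApow))
  have hB'0 : B' ≠ ⊥ := fun h =>
    ash_ideal_pow_ne_bot hB0 (kB * n) (le_bot_iff.mp (h ▸ hBpow))
  have hAP : ∀ Q, s.IsMaxStarIdeal Q → A' ≤ Q → Q = P := by
    intro Q hQ hle
    refine hAuniq Q hQ ?_
    have h1 : A ^ (kA * n) ≤ Q := le_trans hApow hle
    calc A ≤ A.radical := Ideal.le_radical
      _ = (A ^ (kA * n)).radical := (Ideal.radical_pow A (Nat.mul_pos hkA hn).ne').symm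
      _ ≤ Q.radical := Ideal.radical_mono h1
      _ = Q := hQ.2.2.1.radical
  have hBP : ∀ Q, s.IsMaxStarIdeal Q → B' ≤ Q → Q = P := by
    intro Q hQ hle
    refine hBuniq Q hQ ?_
    have h1 : B ^ (kB * n) ≤ Q := le_trans hBpow hle
    calc B ≤ B.radical := Ideal.le_radical
      _ = (B ^ (kB * n)).radical := (Ideal.radical_pow B (Nat.mul_pos hkB hn).ne').symm
      _ ≤ Q.radical := Ideal.radical_mono h1
      _ = Q := hQ.2.2.1.radical
  rcases ash_dichotomy s P hPmax hA'0 hB'0 hCinv hAP hBP with hd | hd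
  · refine ⟨n, hn, Or.inl ?_⟩
    calc ((B ^ n : Ideal D) : FractionalIdeal (nonZeroDivisors D) K)
        ≤ s.star ↑(B ^ n) := s.le_star _ (coeIdeal_ne_zero.mpr (ash_ideal_pow_ne_bot hB0 n))
      _ = s.star ↑B' := hBstar.symm
      _ ≤ s.star (s.star ↑A') := s.star_mono _ _ (coeIdeal_ne_zero.mpr hB'0)
          (ash_star_ne_zero s (coeIdeal_ne_zero.mpr hA'0)) hd
      _ = s.star ↑A' := s.star_star _ (coeIdeal_ne_zero.mpr hA'0)
      _ = s.star ↑(A ^ n) := hAstar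
  · refine ⟨n, hn, Or.inr ?_⟩
    calc ((A ^ n : Ideal D) : FractionalIdeal (nonZeroDivisors D) K)
        ≤ s.star ↑(A ^ n) := s.le_star _ (coeIdeal_ne_zero.mpr (ash_ideal_pow_ne_bot hA0 n))
      _ = s.star ↑A' := hAstar.symm
      _ ≤ s.star (s.star ↑B') := s.star_mono _ _ (coeIdeal_ne_zero.mpr hA'0)
          (ash_star_ne_zero s (coeIdeal_ne_zero.mpr hB'0)) hd
      _ = s.star ↑B' := s.star_star _ (coeIdeal_ne_zero.mpr hB'0)
      _ = s.star ↑(B ^ n) := hBstar
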